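/- Let F be a field and let m ≥ 2 and p ≥ 2 both be even. With g^{(1)}_{k,s,t}(x) = x^{smp+kp+p−1+t} + x^{kmp+sp+p−1−t}, g^{(2)}_{k,s,t}(x) = x^{smp+kp+p−1+t} − x^{kmp+sp+p−1−t} in F[x] and φ(k,s,t) = (s+1,0,p−t) if k = m−1, φ(k,s,t) = (s,k+1,p−t) if k ≤ m−2, consider the loop Y = { φ^j(m−1, m/2−1, p/2) : 0 ≤ j ≤ m−2 } of size m−1. Then: (1) dim_F Span{ g^{(1)}_v(x) : v ∈ Y } = m−1−δ, where δ = 1 if char F = 2 and δ = 0 otherwise; (2) dim_F Span{ g^{(2)}_v(x) : v ∈ Y } = m−2; and (3) if char F = 2, then g^{(1)}_{(m−1, m/2−1, p/2)}(x) = Σ_{j=1}^{m−2} g^{(1)}_{φ^j(m−1, m/2−1, p/2)}(x). -/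

import Mathlib

open Polynomial

/-- `g⁽¹⁾_{k,s,t}(x) = x^{smp+kp+p-1+t} + x^{kmp+sp+p-1-t}` for a triple `(k,s,t)`. -/
noncomputable def gOne (F : Type*) [Field F] (m p : ℕ) (v : ℕ × ℕ × ℕ) : Polynomial F :=
  (X : Polynomial F) ^ (v.2.1 * (m * p) + v.1 * p + (p - 1) + v.2.2)
    + (X : Polynomial F) ^ (v.1 * (m * p) + v.2.1 * p + (p - 1 - v.2.2))

/-- `g⁽²⁾_{k,s,t}(x) = x^{smp+kp+p-1+t} - x^{kmp+sp+p-1-t}` for a triple `(k,s,t)`. -/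
noncomputable def gTwo (F : Type*) [Field F] (m p : ℕ) (v : ℕ × ℕ × ℕ) : Polynomial F :=
  (X : Polynomial F) ^ (v.2.1 * (m * p) + v.1 * p + (p - 1) + v.2.2)
    - (X : Polynomial F) ^ (v.1 * (m * p) + v.2.1 * p + (p - 1 - v.2.2))

/-- The chain map `φ(k,s,t) = (s+1, 0, p-t)` if `k = m-1`, and
`φ(k,s,t) = (s, k+1, p-t)` if `k ≤ m-2`. -/
def phiMap (m p : ℕ) : ℕ × ℕ × ℕ → ℕ × ℕ × ℕ :=
  fun v => if v.1 = m - 1 then (v.2.1 + 1, 0, p - v.2.2) else (v.2.1, v.1 + 1, p - v.2.2)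

/-- The exceptional loop `Y = { φʲ(m-1, m/2-1, p/2) : 0 ≤ j ≤ m-2 }` (for `m, p` even). -/
def loopYexc (m p : ℕ) : Set (ℕ × ℕ × ℕ) :=
  { v | ∃ i ≤ m - 2, v = (phiMap m p)^[i] (m - 1, m / 2 - 1, p / 2) }


section Aux
open Fin

/-- exponents around the loop -/
def expE (l u j : ℕ) : ℕ :=
  if j = 0 then l * ((2*l+2)*(2*u+2)) + (2*l+1) * (2*u+2) + (3*u+2)
  else if j % 2 = 1 then (j/2) * ((2*l+2)*(2*u+2)) + (l+1+j/2) * (2*u+2) + (3*u+2)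
  else (l+1+j/2) * ((2*l+2)*(2*u+2)) + (j/2-1) * (2*u+2) + (3*u+2)

def cE (l j : ℕ) : ℕ :=
  if j = 0 then l*(2*l+2) + (2*l+1)
  else if j % 2 = 1 then (j/2)*(2*l+2) + (l+1+j/2)
  else (l+1+j/2)*(2*l+2) + (j/2-1)

lemma qr_unique {M q1 r1 q2 r2 : ℕ} (hM : 0 < M) (h1 : r1 < M) (h2 : r2 < M)
    (h : q1*M + r1 = q2*M + r2) : q1 = q2 ∧ r1 = r2 := by
  have e1 : q1 = (q1 * M + r1) / M := by
    rw [add_comm, mul_comm, Nat.add_mul_div_left _ _ hM, Nat.div_eq_of_lt h1, zero_add]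
  have e2 : q2 = (q2 * M + r2) / M := by
    rw [add_comm, mul_comm, Nat.add_mul_div_left _ _ hM, Nat.div_eq_of_lt h2, zero_add]
  have hq : q1 = q2 := by rw [e1, e2, h]
  subst hq
  exact ⟨rfl, by omega⟩

lemma expE_eq_cE (l u j : ℕ) : expE l u j = cE l j * (2*u+2) + (3*u+2) := by
  unfold expE cE; split_ifs <;> ring

lemma cE_inj {l j1 j2 : ℕ} (h1 : j1 ≤ 2*l) (h2 : j2 ≤ 2*l) (h : cE l j1 = cE l j2) :
    j1 = j2 := by
  unfold cE at h
  split_ifs at h <;>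
    [skip; skip; skip; skip; skip; skip; skip; skip; skip] <;>
    (obtain ⟨hq, hr⟩ := qr_unique (M := 2*l+2) (by omega) (by omega) (by omega) h; omega)

lemma expE_inj {l u j1 j2 : ℕ} (h1 : j1 ≤ 2*l) (h2 : j2 ≤ 2*l)
    (h : expE l u j1 = expE l u j2) : j1 = j2 := by
  rw [expE_eq_cE, expE_eq_cE] at h
  have h' : cE l j1 * (2*u+2) = cE l j2 * (2*u+2) := by omega
  exact cE_inj h1 h2 (Nat.eq_of_mul_eq_mul_right (by omega) h')

def wSeq (l u j : ℕ) : ℕ × ℕ × ℕ :=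
  if j = 0 then (2*l+1, l, u+1)
  else if j % 2 = 1 then (l + 1 + j/2, j/2, u+1)
  else (j/2 - 1, l + 1 + j/2, u+1)

lemma phiMap_wSeq {l u j : ℕ} (hj : j + 1 ≤ 2*l) :
    phiMap (2*l+2) (2*u+2) (wSeq l u j) = wSeq l u (j+1) := by
  unfold phiMap wSeq
  split_ifs <;> simp_all [Prod.ext_iff] <;> omega

lemma iter_wSeq {l u : ℕ} {j : ℕ} (hj : j ≤ 2*l) :
    (phiMap (2*l+2) (2*u+2))^[j] (2*l+1, l, u+1) = wSeq l u j := by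
  induction j with
  | zero => simp [wSeq]
  | succ j ih =>
      rw [Function.iterate_succ_apply', ih (by omega), phiMap_wSeq (by omega)]

def predC (l j : ℕ) : ℕ := if j = 0 then 2*l else j - 1

lemma expE_odd (l u i : ℕ) :
    expE l u (2*i+1) = i*((2*l+2)*(2*u+2)) + (l+1+i)*(2*u+2) + (3*u+2) := by
  have h2 : (2*i+1) % 2 = 1 := by omega
  have h3 : (2*i+1) / 2 = i := by omega
  simp [expE, h2, h3]

lemma expE_even (l u i : ℕ) :
    expE l u (2*i+2) = (l+2+i)*((2*l+2)*(2*u+2)) + i*(2*u+2) + (3*u+2) := by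
  have h2 : (2*i+2) % 2 = 0 := by omega
  have h3 : (2*i+2) / 2 = i+1 := by omega
  simp [expE, h2, h3]
  omega

lemma wSeq_odd (l u i : ℕ) : wSeq l u (2*i+1) = (l+1+i, i, u+1) := by
  have h2 : (2*i+1) % 2 = 1 := by omega
  have h3 : (2*i+1) / 2 = i := by omega
  simp [wSeq, h2, h3]

lemma wSeq_even (l u i : ℕ) : wSeq l u (2*i+2) = (i, l+2+i, u+1) := by
  have h2 : (2*i+2) % 2 = 0 := by omega
  have h3 : (2*i+2) / 2 = i+1 := by omega
  simp [wSeq, h2, h3]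
  omega

lemma expE_zero (l u : ℕ) :
    expE l u 0 = l * ((2*l+2)*(2*u+2)) + (2*l+1)*(2*u+2) + (3*u+2) := by
  simp [expE]

lemma exps_wSeq (l u j : ℕ) :
    ((wSeq l u j).2.1 * ((2*l+2)*(2*u+2)) + (wSeq l u j).1 * (2*u+2)
        + ((2*u+2) - 1) + (wSeq l u j).2.2 = expE l u j)
  ∧ ((wSeq l u j).1 * ((2*l+2)*(2*u+2)) + (wSeq l u j).2.1 * (2*u+2)
        + ((2*u+2) - 1 - (wSeq l u j).2.2) = expE l u (predC l j)) := by
  have e1 : (2*u+2) - 1 = 2*u+1 := by omega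
  have e3 : 2*u+1 - (u+1) = u := by omega
  rcases eq_or_ne j 0 with rfl | hj0
  · have hw : wSeq l u 0 = (2*l+1, l, u+1) := by simp [wSeq]
    have hp : predC l 0 = 2*l := by simp [predC]
    rw [hw, hp]
    constructor
    · rw [expE_zero]; simp only [e1]; ring
    · rcases eq_or_ne l 0 with rfl | hl
      · rw [expE_zero]; simp only [e1, e3]; ring
      · obtain ⟨i, rfl⟩ : ∃ i, l = i+1 := ⟨l-1, by omega⟩
        have h2 : 2*(i+1) = 2*i+2 := by ring
        rw [h2, expE_even]; simp only [e1, e3]; ring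
  · obtain ⟨i, rfl | rfl⟩ : ∃ i, j = 2*i+1 ∨ j = 2*i+2 := ⟨(j-1)/2, by omega⟩
    · rw [wSeq_odd, expE_odd]
      have hp : predC l (2*i+1) = 2*i := by simp [predC]
      rw [hp]
      constructor
      · simp only [e1]; ring
      · rcases eq_or_ne i 0 with rfl | hi
        · have h2 : 2*0 = 0 := by ring
          rw [h2, expE_zero]; simp only [e1, e3]; ring
        · obtain ⟨i', rfl⟩ : ∃ i', i = i'+1 := ⟨i-1, by omega⟩
          have h2 : 2*(i'+1) = 2*i'+2 := by ring
          rw [h2, expE_even]; simp only [e1, e3]; ring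
    · rw [wSeq_even, expE_even]
      have hp : predC l (2*i+2) = 2*i+1 := by simp [predC]
      rw [hp, expE_odd]
      constructor <;> (simp only [e1, e3]; ring)


lemma coeff_key_plus {F : Type*} [Field F] {N : ℕ} {e : Fin (N+1) → ℕ}
    (he : Function.Injective e) (c : Fin (N+1) → F)
    (hc : ∑ j, c j • ((X:F[X])^(e j) + X^(e (j-1))) = 0) :
    ∀ v : Fin (N+1), c v + c (v+1) = 0 := by
  intro v
  have h0 := congrArg (fun q => Polynomial.coeff q (e v)) hc
  simp only [finset_sum_coeff, coeff_smul, coeff_add, coeff_X_pow, he.eq_iff,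
    smul_eq_mul, mul_add, mul_ite, mul_one, mul_zero, Finset.sum_add_distrib,
    coeff_zero, eq_sub_iff_add_eq] at h0
  rw [Finset.sum_ite_eq Finset.univ v c, Finset.sum_ite_eq Finset.univ (v+1) c] at h0
  simpa using h0

open Fin.NatCast in
lemma linIndep_plus {F : Type*} [Field F] {N : ℕ} (hn : Odd (N+1))
    (hchar : ringChar F ≠ 2) {e : Fin (N+1) → ℕ} (he : Function.Injective e) :
    LinearIndependent F (fun j : Fin (N+1) => (X:F[X])^(e j) + X^(e (j-1))) := by
  rw [Fintype.linearIndependent_iff]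
  intro c hc
  have key := coeff_key_plus he c hc
  have step : ∀ v : Fin (N+1), c (v+1) = - c v := fun v => by
    have := key v
    rw [add_comm] at this
    exact eq_neg_of_add_eq_zero_left this
  have iter : ∀ (i : ℕ) (v : Fin (N+1)), c (v + (i : Fin (N+1))) = (-1)^i * c v := by
    intro i
    induction i with
    | zero => intro v; simp
    | succ i ih =>
        intro v
        have : ((i+1 : ℕ) : Fin (N+1)) = (i : Fin (N+1)) + 1 := by push_cast; ring
        rw [this, ← add_assoc, step (v + (i : Fin (N+1))), ih]
        ring
  intro v
  have h2 := iter (N+1) v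
  rw [Fin.natCast_self, add_zero, Odd.neg_one_pow hn, neg_one_mul] at h2
  have : (2 : F) * c v = 0 := by
    rw [two_mul]
    nth_rewrite 1 [h2]
    ring
  exact (mul_eq_zero.mp this).resolve_left (Ring.two_ne_zero hchar)

lemma coeff_key_minus {F : Type*} [Field F] {N : ℕ} {e : Fin (N+1) → ℕ}
    (he : Function.Injective e) (c : Fin N → F)
    (hc : ∑ j, c j • ((X:F[X])^(e (castSucc j)) - X^(e (castSucc j - 1))) = 0) :
    ∀ v : Fin (N+1),
      (∑ j : Fin N, if v = castSucc j then c j else 0)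
        = (∑ j : Fin N, if v + 1 = castSucc j then c j else 0) := by
  intro v
  have h0 := congrArg (fun q => Polynomial.coeff q (e v)) hc
  simp only [finset_sum_coeff, coeff_smul, coeff_sub, coeff_X_pow, he.eq_iff,
    smul_eq_mul, mul_sub, mul_ite, mul_one, mul_zero, Finset.sum_sub_distrib,
    coeff_zero, eq_sub_iff_add_eq] at h0
  exact sub_eq_zero.mp h0

lemma linIndep_minus {F : Type*} [Field F] {N : ℕ} {e : Fin (N+1) → ℕ}
    (he : Function.Injective e) :
    LinearIndependent F
      (fun j : Fin N => (X:F[X])^(e (castSucc j)) - X^(e (castSucc j - 1))) := by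
  rw [Fintype.linearIndependent_iff]
  intro c hc
  have key := coeff_key_minus he c hc
  -- c 0 = 0 (from v = last)
  have hlast := key (Fin.last N)
  have hL : (∑ j : Fin N, if Fin.last N = castSucc j then c j else 0) = 0 :=
    Finset.sum_eq_zero fun j _ => if_neg (by exact fun h => (castSucc_lt_last j).ne h.symm)
  -- main: ∀ i (h : i < N), c ⟨i, h⟩ = 0
  have main : ∀ i (h : i < N), c ⟨i, h⟩ = 0 := by
    intro i
    induction i with
    | zero =>
        intro h
        rw [hL] at hlast
        have hR : (∑ j : Fin N, if Fin.last N + 1 = castSucc j then c j else 0)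
            = c ⟨0, h⟩ := by
          rw [Finset.sum_eq_single ⟨0, h⟩]
          · rw [Fin.last_add_one, if_pos (show (0 : Fin (N+1)) = castSucc ⟨0, h⟩ from
              Fin.ext (by simp))]
          · intro b _ hb
            rw [Fin.last_add_one]
            apply if_neg
            intro hcon
            apply hb
            apply Fin.ext
            have := congrArg Fin.val hcon
            simpa using this.symm
          · intro hmem; exact absurd (Finset.mem_univ _) hmem
        rw [hR] at hlast
        exact hlast.symm
    | succ i ih =>
        intro h
        have hi : i < N := by omega
        have hv := key (castSucc ⟨i, hi⟩)
        have hL2 : (∑ j : Fin N, if castSucc ⟨i, hi⟩ = castSucc j then c j else 0)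
            = c ⟨i, hi⟩ := by
          rw [Finset.sum_eq_single ⟨i, hi⟩]
          · rw [if_pos rfl]
          · intro b _ hb
            apply if_neg
            intro hcon
            exact hb (castSucc_injective _ hcon).symm
          · intro hmem; exact absurd (Finset.mem_univ _) hmem
        have hcs : castSucc (⟨i, hi⟩ : Fin N) + 1 = castSucc ⟨i+1, h⟩ := by
          apply Fin.ext
          simp [Fin.add_def]
          omega
        have hR2 : (∑ j : Fin N, if castSucc ⟨i, hi⟩ + 1 = castSucc j then c j else 0)
            = c ⟨i+1, h⟩ := by
          rw [Finset.sum_eq_single ⟨i+1, h⟩]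
          · rw [if_pos hcs]
          · intro b _ hb
            apply if_neg
            intro hcon
            exact hb (castSucc_injective _ (hcs.symm.trans hcon)).symm
          · intro hmem; exact absurd (Finset.mem_univ _) hmem
        rw [hL2, hR2] at hv
        rw [← hv]
        exact ih hi
  intro j
  have := main j.val j.isLt
  simpa using this

lemma sum_minus_zero {F : Type*} [Field F] {N : ℕ} (e : Fin (N+1) → ℕ) :
    ∑ j : Fin (N+1), ((X:F[X])^(e j) - X^(e (j-1))) = 0 := by
  rw [Finset.sum_sub_distrib, sub_eq_zero]
  exact (Equiv.sum_comp (Equiv.subRight (1 : Fin (N+1))) (fun v => (X:F[X])^(e v))).symm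

lemma span_minus {F : Type*} [Field F] {N : ℕ} {e : Fin (N+1) → ℕ}
    (he : Function.Injective e) :
    Module.finrank F (Submodule.span F
      (Set.range (fun j : Fin (N+1) => (X:F[X])^(e j) - X^(e (j-1))))) = N := by
  set f : Fin (N+1) → Polynomial F := fun j => (X:F[X])^(e j) - X^(e (j-1)) with hf
  have hsum : ∑ j, f j = 0 := sum_minus_zero e
  have hspan : Submodule.span F (Set.range f)
      = Submodule.span F (Set.range (fun j : Fin N => f (castSucc j))) := by
    apply le_antisymm
    · rw [Submodule.span_le]
      rintro _ ⟨j, rfl⟩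
      by_cases hj : j = Fin.last N
      · subst hj
        have hrel : f (Fin.last N) = - ∑ j : Fin N, f (castSucc j) := by
          rw [Fin.sum_univ_castSucc] at hsum
          exact eq_neg_of_add_eq_zero_right hsum
        rw [SetLike.mem_coe, hrel]
        exact Submodule.neg_mem _ (Submodule.sum_mem _ fun j _ =>
          Submodule.subset_span ⟨j, rfl⟩)
      · obtain ⟨j', rfl⟩ : ∃ j', castSucc j' = j := ⟨j.castPred hj, by simp⟩
        exact Submodule.subset_span ⟨j', rfl⟩
    · apply Submodule.span_mono
      rintro _ ⟨j, rfl⟩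
      exact ⟨castSucc j, rfl⟩
  have hli : LinearIndependent F (fun j : Fin N => f (castSucc j)) := linIndep_minus he
  rw [hspan, finrank_span_eq_card hli, Fintype.card_fin]

lemma fin_sub_one_val (l : ℕ) (j : Fin (2*l+1)) :
    ((j - 1 : Fin (2*l+1))).val = if j.val = 0 then 2*l else j.val - 1 := by
  rw [Fin.coe_sub_one]
  by_cases h : j = 0
  · simp [h]
  · rw [if_neg h, if_neg (fun h' => h (Fin.ext (by rw [h', Fin.val_zero])))]

lemma loopY_eq (l u : ℕ) : loopYexc (2*l+2) (2*u+2)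
    = {v | ∃ i ≤ 2*l, v = (phiMap (2*l+2) (2*u+2))^[i] (2*l+1, l, u+1)} := by
  unfold loopYexc
  have h1 : (2*l+2) - 2 = 2*l := by omega
  have h2 : (2*l+2) - 1 = 2*l+1 := by omega
  have h3 : (2*l+2)/2 - 1 = l := by omega
  have h4 : (2*u+2)/2 = u+1 := by omega
  rw [h1, h2, h3, h4]

variable {F : Type*} [Field F]

lemma gOne_eq (l u i : ℕ) (hi : i ≤ 2*l) :
    gOne F (2*l+2) (2*u+2) ((phiMap (2*l+2) (2*u+2))^[i] (2*l+1, l, u+1))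
      = X^(expE l u i) + X^(expE l u (predC l i)) := by
  rw [iter_wSeq hi]
  unfold gOne
  rw [(exps_wSeq l u i).1, (exps_wSeq l u i).2]

lemma gTwo_eq (l u i : ℕ) (hi : i ≤ 2*l) :
    gTwo F (2*l+2) (2*u+2) ((phiMap (2*l+2) (2*u+2))^[i] (2*l+1, l, u+1))
      = X^(expE l u i) - X^(expE l u (predC l i)) := by
  rw [iter_wSeq hi]
  unfold gTwo
  rw [(exps_wSeq l u i).1, (exps_wSeq l u i).2]

lemma ee_inj (l u : ℕ) :
    Function.Injective (fun j : Fin (2*l+1) => expE l u j.val) := by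
  intro j1 j2 h
  exact Fin.ext (expE_inj (by omega) (by omega) h)

lemma ee_sub_one (l u : ℕ) (j : Fin (2*l+1)) :
    expE l u ((j - 1 : Fin (2*l+1))).val = expE l u (predC l j.val) := by
  rw [fin_sub_one_val]
  unfold predC
  rfl

lemma gOne_image (l u : ℕ) :
    gOne F (2*l+2) (2*u+2) '' loopYexc (2*l+2) (2*u+2)
      = Set.range (fun j : Fin (2*l+1) =>
          (X:Polynomial F)^(expE l u j.val) + X^(expE l u ((j - 1 : Fin (2*l+1))).val)) := by
  rw [loopY_eq]
  ext q
  constructor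
  · rintro ⟨v, ⟨i, hi, rfl⟩, rfl⟩
    refine ⟨⟨i, by omega⟩, ?_⟩
    simp only [ee_sub_one]
    exact (gOne_eq l u i hi).symm
  · rintro ⟨j, rfl⟩
    refine ⟨(phiMap (2*l+2) (2*u+2))^[j.val] (2*l+1, l, u+1), ⟨j.val, by omega, rfl⟩, ?_⟩
    simp only [ee_sub_one]
    exact gOne_eq l u j.val (by omega)

lemma gTwo_image (l u : ℕ) :
    gTwo F (2*l+2) (2*u+2) '' loopYexc (2*l+2) (2*u+2)
      = Set.range (fun j : Fin (2*l+1) =>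
          (X:Polynomial F)^(expE l u j.val) - X^(expE l u ((j - 1 : Fin (2*l+1))).val)) := by
  rw [loopY_eq]
  ext q
  constructor
  · rintro ⟨v, ⟨i, hi, rfl⟩, rfl⟩
    refine ⟨⟨i, by omega⟩, ?_⟩
    simp only [ee_sub_one]
    exact (gTwo_eq l u i hi).symm
  · rintro ⟨j, rfl⟩
    refine ⟨(phiMap (2*l+2) (2*u+2))^[j.val] (2*l+1, l, u+1), ⟨j.val, by omega, rfl⟩, ?_⟩
    simp only [ee_sub_one]
    exact gTwo_eq l u j.val (by omega)

end Aux
/-- (Lemma 7(ii) of the paper.)  For `m, p` both even, on the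
exceptional loop `Y` of size `m-1`:  the span of `{g⁽¹⁾_v : v ∈ Y}` has
dimension `m-1-δ` (with `δ = 1` iff `char F = 2`), the span of
`{g⁽²⁾_v : v ∈ Y}` has dimension `m-2`, and in characteristic `2`,
`g⁽¹⁾_{(m-1,m/2-1,p/2)} = Σ_{j=1}^{m-2} g⁽¹⁾_{φʲ(m-1,m/2-1,p/2)}`. -/
theorem stmt_12 (F : Type*) [Field F] (m p : ℕ) (hm : 2 ≤ m) (hp : 2 ≤ p)
    (hme : Even m) (hpe : Even p) :
    (Module.finrank F (Submodule.span F (gOne F m p '' loopYexc m p))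
      = m - 1 - (if ringChar F = 2 then 1 else 0)) ∧
    (Module.finrank F (Submodule.span F (gTwo F m p '' loopYexc m p)) = m - 2) ∧
    (ringChar F = 2 →
      gOne F m p (m - 1, m / 2 - 1, p / 2)
        = ∑ j ∈ Finset.Icc 1 (m - 2),
            gOne F m p ((phiMap m p)^[j] (m - 1, m / 2 - 1, p / 2))) := by
  obtain ⟨a, ha⟩ := hme
  obtain ⟨b, hb⟩ := hpe
  obtain ⟨l, rfl⟩ : ∃ l, m = 2*l+2 := ⟨a - 1, by omega⟩
  obtain ⟨u, rfl⟩ : ∃ u, p = 2*u+2 := ⟨b - 1, by omega⟩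
  have hEinj : Function.Injective (fun j : Fin (2*l+1) => expE l u j.val) := ee_inj l u
  refine ⟨?_, ?_, ?_⟩
  · rw [gOne_image]
    by_cases hchar : ringChar F = 2
    · rw [if_pos hchar]
      haveI : CharP F 2 := hchar ▸ ringChar.charP F
      have hfun : (fun j : Fin (2*l+1) =>
            (X:Polynomial F)^(expE l u j.val) + X^(expE l u ((j - 1 : Fin (2*l+1))).val))
          = (fun j : Fin (2*l+1) =>
            (X:Polynomial F)^(expE l u j.val) - X^(expE l u ((j - 1 : Fin (2*l+1))).val)) := by
        funext j
        exact (CharTwo.sub_eq_add _ _).symm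
      rw [hfun, span_minus hEinj]
      omega
    · rw [if_neg hchar]
      have hodd : Odd (2*l+1) := ⟨l, by ring⟩
      rw [finrank_span_eq_card (linIndep_plus hodd hchar hEinj), Fintype.card_fin]
      omega
  · rw [gTwo_image, span_minus hEinj]
    omega
  · intro hchar
    haveI : CharP F 2 := hchar ▸ ringChar.charP F
    have h2 : (2*l+2) - 1 = 2*l+1 := by omega
    have h3 : (2*l+2)/2 - 1 = l := by omega
    have h4 : (2*u+2)/2 = u+1 := by omega
    have h5 : (2*l+2) - 2 = 2*l := by omega
    rw [h2, h3, h4, h5]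
    have hLHS : gOne F (2*l+2) (2*u+2) (2*l+1, l, u+1)
        = X^(expE l u 0) + X^(expE l u (predC l 0)) := by
      have := gOne_eq (F := F) l u 0 (by omega)
      simpa using this
    have hRHS : ∀ j ∈ Finset.Icc 1 (2*l),
        gOne F (2*l+2) (2*u+2) ((phiMap (2*l+2) (2*u+2))^[j] (2*l+1, l, u+1))
          = X^(expE l u j) + X^(expE l u (predC l j)) :=
      fun j hj => gOne_eq l u j (by simp at hj; omega)
    rw [hLHS, Finset.sum_congr rfl hRHS]
    have hbij : ∑ j ∈ Finset.Icc 0 (2*l), (X:Polynomial F)^(expE l u (predC l j))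
        = ∑ j ∈ Finset.Icc 0 (2*l), (X:Polynomial F)^(expE l u j) := by
      apply Finset.sum_nbij' (i := fun j => predC l j)
        (j := fun j => if j = 2*l then 0 else j+1)
      · intro x hx; simp only [Finset.mem_Icc] at hx ⊢
        simp only [predC]; split_ifs <;> omega
      · intro x hx; simp only [Finset.mem_Icc] at hx ⊢
        split_ifs <;> omega
      · intro x hx; simp only [Finset.mem_Icc] at hx
        simp only [predC]; split_ifs <;> omega
      · intro x hx; simp only [Finset.mem_Icc] at hx
        simp only [predC]; split_ifs <;> (try contradiction) <;> omega
      · intro x _; rfl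
    have htot : ∑ j ∈ Finset.Icc 0 (2*l),
        ((X:Polynomial F)^(expE l u j) + X^(expE l u (predC l j))) = 0 := by
      rw [Finset.sum_add_distrib, hbij]
      exact CharTwo.add_self_eq_zero _
    have hins : Finset.Icc 0 (2*l) = insert 0 (Finset.Icc 1 (2*l)) := by
      ext x; simp; omega
    rw [hins, Finset.sum_insert (by simp)] at htot
    have := eq_neg_of_add_eq_zero_left htot
    rw [this, CharTwo.neg_eq]
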